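/- If G and H are terminating impartial games with Γ₀(G) = Γ₀(H), then for every terminating game X, the ordinal sums X : G and X : H have equal Grundy numbers: Γ₀(X : G) = Γ₀(X : H). -/

import Mathlib

universe u

/-- Combinatorial games (removed from Mathlib; restated with the December 2024 definition). -/
inductive SetTheory.PGame : Type (u + 1)
  | mk : ∀ α β : Type u, (α → SetTheory.PGame) → (β → SetTheory.PGame) → SetTheory.PGame

namespace SetTheory.PGame

def LeftMoves : PGame → Type u
  | mk l _ _ _ => l

def RightMoves : PGame → Type u
  | mk _ r _ _ => r

def moveLeft : ∀ g : PGame, LeftMoves g → PGame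
  | mk _ _ L _ => L

def moveRight : ∀ g : PGame, RightMoves g → PGame
  | mk _ _ _ R => R

inductive IsOption : PGame → PGame → Prop
  | moveLeft {x : PGame} (i : x.LeftMoves) : IsOption (x.moveLeft i) x
  | moveRight {x : PGame} (i : x.RightMoves) : IsOption (x.moveRight i) x

theorem wf_isOption : WellFounded IsOption :=
  ⟨fun x => by
    induction x with
    | mk l r L R IHl IHr =>
      refine Acc.intro _ fun y h => ?_
      cases h with
      | moveLeft i => exact IHl i
      | moveRight j => exact IHr j⟩

instance le : LE PGame :=
  ⟨@Sym2.GameAdd.recursion PGame IsOption (fun _ _ => Prop) wf_isOption fun x y le =>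
      (∀ i, ¬le y (x.moveLeft i) (Sym2.GameAdd.snd_fst <| IsOption.moveLeft i)) ∧
        ∀ j, ¬le (y.moveRight j) x (Sym2.GameAdd.fst_snd <| IsOption.moveRight j)⟩

def neg : PGame → PGame
  | mk l r L R => mk r l (fun i => neg (R i)) fun i => neg (L i)

instance : Neg PGame :=
  ⟨neg⟩

def Equiv (x y : PGame) : Prop :=
  x ≤ y ∧ y ≤ x

instance : HasEquiv PGame :=
  ⟨Equiv⟩

def ImpartialAux : PGame → Prop
  | G@(mk _ _ L R) => (G ≈ -G) ∧ (∀ i, ImpartialAux (L i)) ∧ ∀ j, ImpartialAux (R j)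

class Impartial (G : PGame) : Prop where
  out : ImpartialAux G

end SetTheory.PGame

/-- Nimbers (removed from Mathlib): a type synonym for `Ordinal`, with its order. -/
def Nimber : Type (u + 1) :=
  Ordinal.{u}

namespace Nimber

noncomputable instance : ConditionallyCompleteLinearOrderBot Nimber :=
  inferInstanceAs (ConditionallyCompleteLinearOrderBot Ordinal)

instance : WellFoundedRelation Nimber :=
  inferInstanceAs (WellFoundedRelation Ordinal)

end Nimber

namespace SetTheory.PGame

/-- The Grundy value of a game (December 2024 definition): the mex of the options' values. -/
noncomputable def grundyValue : PGame.{u} → Nimber.{u}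
  | mk _ _ L _ => sInf (Set.range fun i => grundyValue (L i))ᶜ

end SetTheory.PGame

open SetTheory PGame Nimber

/-- The ordinal sum `G : H` of games: its options are `G : H'` for options `H'` of `H`,
and `G'` for options `G'` of `G` (discarding `H`). -/
def osum (G : PGame) : PGame → PGame
  | PGame.mk l r L R =>
    PGame.mk (G.LeftMoves ⊕ l) (G.RightMoves ⊕ r)
      (Sum.elim G.moveLeft fun j => osum G (L j))
      (Sum.elim G.moveRight fun j => osum G (R j))

/-- The Grundy set `Γ₁(G)`: the set of Grundy numbers of the options of `G`. -/
def grundySet (G : PGame) : Set Nimber :=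
  Set.range fun i => grundyValue (G.moveLeft i)

/-- The ρ-th excluded ordinal of a set `Λ`:
`ex_ρ(Λ) = mex (Λ ∪ { ex_μ(Λ) | μ < ρ })`, where `mex` is the minimal excludant
(least element of the complement). -/
noncomputable def exc (Λ : Set Nimber) : Nimber → Nimber := fun ρ =>
  sInf {a | a ∉ Λ ∧ ∀ μ < ρ, exc Λ μ ≠ a}
termination_by ρ => ρ

universe v

theorem SetTheory.PGame.moveLeft_mk {xl xr : Type u} (L : xl → PGame.{u}) (R : xr → PGame.{u}) :
    (PGame.mk xl xr L R).moveLeft = L := rfl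

theorem SetTheory.PGame.grundyValue_eq_sInf_moveLeft (G : PGame.{u}) :
    grundyValue G = sInf (Set.range (grundyValue ∘ G.moveLeft))ᶜ := by
  cases G
  rw [grundyValue]
  rfl

theorem Nimber.not_bddAbove_compl_of_small (s : Set Nimber.{u}) [Small.{u} s] :
    ¬BddAbove sᶜ :=
  @Ordinal.not_bddAbove_compl_of_small (s : Set Ordinal.{u}) ‹_›

instance Nimber.wellFoundedLT : WellFoundedLT Nimber.{u} :=
  inferInstanceAs (WellFoundedLT Ordinal.{u})

instance Nimber.small_Iio (o : Nimber.{u}) : Small.{u} (Set.Iio o) :=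
  Ordinal.small_Iio (o : Ordinal.{u})

lemma exc_set_eq (Λ : Set Nimber.{max u v}) (ρ : Nimber.{u}) :
    {a | a ∉ Λ ∧ ∀ μ < ρ, exc Λ μ ≠ a} = (Λ ∪ exc Λ '' Set.Iio ρ)ᶜ := by
  ext a
  simp only [Set.mem_setOf_eq, Set.mem_compl_iff, Set.mem_union, Set.mem_image, Set.mem_Iio,
    not_or, not_exists, not_and]

lemma exc_nonempty (Λ : Set Nimber.{max u v}) [Small.{max u v} Λ] (ρ : Nimber.{u}) :
    {a | a ∉ Λ ∧ ∀ μ < ρ, exc Λ μ ≠ a}.Nonempty := by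
  rw [exc_set_eq]
  have h1 : Small.{max u v} (exc Λ '' Set.Iio ρ : Set Nimber.{max u v}) :=
    small_lift _
  have : Small.{max u v} ↥(Λ ∪ exc Λ '' Set.Iio ρ) := small_union _ _
  exact nonempty_of_not_bddAbove (Nimber.not_bddAbove_compl_of_small _)

lemma exc_mem (Λ : Set Nimber.{max u v}) [Small.{max u v} Λ] (ρ : Nimber.{u}) :
    exc Λ ρ ∉ Λ ∧ ∀ μ < ρ, exc Λ μ ≠ exc Λ ρ := by
  rw [exc]
  exact csInf_mem (exc_nonempty Λ ρ)

lemma exc_sInf_compl (Λ : Set Nimber.{max u v}) (S : Set Nimber.{u})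
    [Small.{max u v} Λ] [Small.{u} S] :
    sInf (Λ ∪ exc Λ '' S)ᶜ = exc Λ (sInf Sᶜ) := by
  set m := sInf Sᶜ with hm_def
  have hScompl : Sᶜ.Nonempty := nonempty_of_not_bddAbove (Nimber.not_bddAbove_compl_of_small _)
  have hmS : m ∉ S := csInf_mem hScompl
  have hmem := exc_mem Λ m
  apply le_antisymm
  · apply csInf_le'
    simp only [Set.mem_compl_iff, Set.mem_union, not_or, Set.mem_image, not_exists, not_and]
    refine ⟨hmem.1, fun s hs heq => ?_⟩
    rcases lt_trichotomy s m with hlt | rfl | hgt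
    · exact hmem.2 s hlt heq
    · exact hmS hs
    · exact (exc_mem Λ s).2 m hgt heq.symm
  · have h1 : Small.{max u v} (exc Λ '' S : Set Nimber.{max u v}) := small_lift _
    have h2 : Small.{max u v} ↥(Λ ∪ exc Λ '' S) := small_union _ _
    have hne : (Λ ∪ exc Λ '' S)ᶜ.Nonempty :=
      nonempty_of_not_bddAbove (Nimber.not_bddAbove_compl_of_small _)
    refine le_csInf hne fun a ha => ?_
    by_contra hab
    push_neg at hab
    have hnotmem : a ∉ {x | x ∉ Λ ∧ ∀ μ < m, exc Λ μ ≠ x} := by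
      apply notMem_of_lt_csInf'
      rwa [← exc]
    simp only [Set.mem_setOf_eq, not_and, not_forall, not_not] at hnotmem
    simp only [Set.mem_compl_iff, Set.mem_union, not_or] at ha
    by_cases haL : a ∈ Λ
    · exact ha.1 haL
    · obtain ⟨μ, hμ, heq⟩ := hnotmem haL
      have hμS : μ ∈ S := by
        by_contra hc
        have : m ≤ μ := csInf_le' (Set.mem_compl hc)
        exact absurd hμ (not_lt.2 this)
      exact ha.2 ⟨μ, hμS, heq⟩

instance grundySet_small (X : PGame.{u}) : Small.{u} (grundySet X) := by
  unfold grundySet; exact small_range _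

lemma grundyValue_osum (X : PGame.{max u v}) (G : PGame.{u}) :
    grundyValue (osum.{v, u} X G) = exc (grundySet X) (grundyValue G) := by
  induction G with
  | mk l r L R IHL IHR =>
    rw [show osum.{v, u} X (PGame.mk l r L R) = PGame.mk (X.LeftMoves ⊕ l) (X.RightMoves ⊕ r)
      (Sum.elim X.moveLeft fun j => osum X (L j))
      (Sum.elim X.moveRight fun j => osum X (R j)) from rfl]
    rw [grundyValue_eq_sInf_moveLeft, grundyValue_eq_sInf_moveLeft]
    have hrange : Set.range (grundyValue ∘ (PGame.mk (X.LeftMoves ⊕ l) (X.RightMoves ⊕ r)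
        (Sum.elim X.moveLeft fun j => osum X (L j))
        (Sum.elim X.moveRight fun j => osum X (R j))).moveLeft)
        = grundySet X ∪ exc (grundySet X) '' (Set.range fun j => grundyValue (L j)) := by
      ext a
      simp only [PGame.moveLeft_mk, Set.mem_range, Function.comp_apply, Set.mem_union,
        Set.mem_image, grundySet]
      constructor
      · rintro ⟨i | j, rfl⟩
        · exact Or.inl ⟨i, rfl⟩
        · exact Or.inr ⟨grundyValue (L j), ⟨j, rfl⟩, (IHL j).symm⟩
      · rintro (⟨i, rfl⟩ | ⟨b, ⟨j, rfl⟩, rfl⟩)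
        · exact ⟨Sum.inl i, rfl⟩
        · exact ⟨Sum.inr j, IHL j⟩
    rw [hrange]
    exact exc_sInf_compl (grundySet X) (Set.range fun j => grundyValue (L j))


/-- colon principle: if `Γ₀(G) = Γ₀(H)` then
`Γ₀(X : G) = Γ₀(X : H)` for every terminating impartial game `X`. -/
theorem grundyValue_osum_congr_right (G H : PGame) [G.Impartial] [H.Impartial]
    (h : grundyValue G = grundyValue H) :
    ∀ X : PGame, X.Impartial → grundyValue (osum X G) = grundyValue (osum X H) := by
  intro X _
  rw [grundyValue_osum X G, grundyValue_osum X H, h]
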